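/- If ψₙ and φₙ are nonnegative real sequences, φₙ ∈ (0,1) for all n, ∑ φₙ = ∞, and ψ_{n+1} ≤ (1-φₙ)ψₙ + εₙ where εₙ ≥ 0 and εₙ/φₙ → 0, then ψₙ → 0. -/

import Mathlib

open Filter

theorem stmt_0 (ψ φ ε : ℕ → ℝ)
    (hψ : ∀ n, 0 ≤ ψ n) (hφ : ∀ n, φ n ∈ Set.Ioo (0:ℝ) 1)
    (hε : ∀ n, 0 ≤ ε n)
    (hdiv : Tendsto (fun N => ∑ k ∈ Finset.range N, φ k) atTop atTop)
    (hrec : ∀ n, ψ (n + 1) ≤ (1 - φ n) * ψ n + ε n)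
    (hlim : Tendsto (fun n => ε n / φ n) atTop (nhds 0)) :
    Tendsto ψ atTop (nhds 0) := by
  have key : ∀ δ : ℝ, 0 < δ → ∀ᶠ n in atTop, ψ n < δ := by
    intro δ hδ
    have hhalf : (0:ℝ) < δ / 2 := by linarith
    obtain ⟨N, hN⟩ := (eventually_atTop.mp (hlim.eventually (gt_mem_nhds hhalf)))
    have hstep : ∀ n, N ≤ n → ψ (n + 1) - δ / 2 ≤ (1 - φ n) * (ψ n - δ / 2) := by
      intro n hn
      have hφn := hφ n
      have hεn : ε n ≤ φ n * (δ / 2) := by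
        have := hN n hn
        have := (div_lt_iff₀ hφn.1).mp this
        linarith
      have := hrec n
      nlinarith
    set u : ℕ → ℝ := fun n => max (ψ (N + n) - δ / 2) 0 with hu_def
    have hu0 : 0 ≤ u 0 := le_max_right _ _
    have hu : ∀ n, u (n + 1) ≤ (1 - φ (N + n)) * u n := by
      intro n
      have hφn := hφ (N + n)
      have hnn : (0:ℝ) ≤ 1 - φ (N + n) := by linarith [hφn.2]
      have h1 : ψ (N + n + 1) - δ / 2 ≤ (1 - φ (N + n)) * (ψ (N + n) - δ / 2) :=
        hstep _ (Nat.le_add_right _ _)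
      have h2 : ψ (N + n) - δ / 2 ≤ u n := le_max_left _ _
      have : ψ (N + (n + 1)) - δ / 2 ≤ (1 - φ (N + n)) * u n := by
        rw [← Nat.add_assoc]
        exact h1.trans (mul_le_mul_of_nonneg_left h2 hnn)
      exact max_le this (mul_nonneg hnn (le_max_right _ _))
    have hbound : ∀ n, u n ≤ u 0 * ∏ k ∈ Finset.range n, (1 - φ (N + k)) := by
      intro n
      induction n with
      | zero => simp
      | succ n ih =>
        have hφn := hφ (N + n)
        have hnn : (0:ℝ) ≤ 1 - φ (N + n) := by linarith [hφn.2]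
        calc u (n + 1) ≤ (1 - φ (N + n)) * u n := hu n
          _ ≤ (1 - φ (N + n)) * (u 0 * ∏ k ∈ Finset.range n, (1 - φ (N + k))) :=
              mul_le_mul_of_nonneg_left ih hnn
          _ = u 0 * ∏ k ∈ Finset.range (n + 1), (1 - φ (N + k)) := by
              rw [Finset.prod_range_succ]; ring
    have hexp : ∀ n, ∏ k ∈ Finset.range n, (1 - φ (N + k)) ≤
        Real.exp (-(∑ k ∈ Finset.range n, φ (N + k))) := by
      intro n
      have h1 : ∏ k ∈ Finset.range n, (1 - φ (N + k)) ≤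
          ∏ k ∈ Finset.range n, Real.exp (-(φ (N + k))) := by
        apply Finset.prod_le_prod
        · intro k _; linarith [(hφ (N + k)).2]
        · intro k _
          have := Real.add_one_le_exp (-(φ (N + k)))
          linarith
      have h2 : ∏ k ∈ Finset.range n, Real.exp (-(φ (N + k))) =
          Real.exp (-(∑ k ∈ Finset.range n, φ (N + k))) := by
        rw [← Real.exp_sum]
        simp
      rw [← h2]; exact h1
    have hS : Tendsto (fun n => ∑ k ∈ Finset.range n, φ (N + k)) atTop atTop := by
      have heq : ∀ n, ∑ k ∈ Finset.range n, φ (N + k) =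
          (∑ k ∈ Finset.range (n + N), φ k) - ∑ k ∈ Finset.range N, φ k := by
        intro n
        rw [add_comm n N, Finset.sum_range_add]
        ring
      simp only [heq]
      exact tendsto_atTop_add_const_right _ _ (hdiv.comp (tendsto_add_atTop_nat N))
    have htend : Tendsto (fun n => u 0 * Real.exp (-(∑ k ∈ Finset.range n, φ (N + k))))
        atTop (nhds 0) := by
      have := (Real.tendsto_exp_neg_atTop_nhds_zero.comp hS).const_mul (u 0)
      simpa using this
    have hu_tend : Tendsto u atTop (nhds 0) := by
      apply tendsto_of_tendsto_of_tendsto_of_le_of_le tendsto_const_nhds htend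
      · intro n; exact le_max_right _ _
      · intro n
        exact (hbound n).trans (mul_le_mul_of_nonneg_left (hexp n) hu0)
    obtain ⟨M, hM⟩ := eventually_atTop.mp (hu_tend.eventually (gt_mem_nhds hhalf))
    rw [eventually_atTop]
    refine ⟨N + M, fun n hn => ?_⟩
    have hNn : N ≤ n := le_trans (Nat.le_add_right _ _) hn
    have hMn : M ≤ n - N := Nat.le_sub_of_add_le (by omega)
    have := hM (n - N) hMn
    have hrw : N + (n - N) = n := by omega
    have h3 : ψ n - δ / 2 ≤ u (n - N) := by
      rw [hu_def]
      simp only [hrw]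
      exact le_max_left _ _
    linarith
  rw [Metric.tendsto_atTop]
  intro δ hδ
  obtain ⟨M, hM⟩ := eventually_atTop.mp (key δ hδ)
  refine ⟨M, fun n hn => ?_⟩
  rw [Real.dist_eq, sub_zero, abs_of_nonneg (hψ n)]
  exact hM n hn
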